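/- Let M be an n×n real symmetric matrix with exactly one negative eigenvalue, and suppose b := 1ᵀM1 < 0, where 1 is the all-ones vector. Define α := −M1 and the (n+1)×(n+1) block matrix Ω = [[M, α],[αᵀ, b]]. Then Ω has the same rank as M and has exactly one negative eigenvalue. -/

import Mathlib

open Matrix

lemma quad_eq {m : ℕ} (A : Matrix (Fin m) (Fin m) ℝ) (hA : A.IsHermitian) (x : Fin m → ℝ) :
    x ⬝ᵥ A *ᵥ x = ∑ k, hA.eigenvalues k * ((⇑(hA.eigenvectorBasis k) : Fin m → ℝ) ⬝ᵥ x) ^ 2 := by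
  set B := hA.eigenvectorBasis with hB
  set c : Fin m → ℝ := fun k => (⇑(B k) : Fin m → ℝ) ⬝ᵥ x with hc
  have hx : ∀ j, x j = ∑ k, c k * (B k) j := by
    intro j
    have h := congrArg (fun v : EuclideanSpace ℝ (Fin m) => v j) (B.sum_repr' (WithLp.toLp 2 x))
    simp only [WithLp.ofLp_sum, WithLp.ofLp_smul, Finset.sum_apply, Pi.smul_apply,
      smul_eq_mul] at h
    rw [← h]
    refine Finset.sum_congr rfl fun k _ => ?_
    have h3 : (inner ℝ (B k) (WithLp.toLp 2 x) : ℝ) = c k := by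
      simp [hc, PiLp.inner_apply, dotProduct, RCLike.inner_apply, mul_comm]
    rw [h3]
  have heig : ∀ k i, (∑ j, A i j * (B k) j) = hA.eigenvalues k * (B k) i := by
    intro k i
    have h := congrFun (hA.mulVec_eigenvectorBasis k) i
    simpa [mulVec, dotProduct, Pi.smul_apply, smul_eq_mul] using h
  calc x ⬝ᵥ A *ᵥ x = ∑ i, x i * ∑ k, c k * (hA.eigenvalues k * (B k) i) := by
        simp only [dotProduct, mulVec]
        refine Finset.sum_congr rfl fun i _ => ?_
        congr 1
        calc (fun j => A i j) ⬝ᵥ x = ∑ j, A i j * x j := rfl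
          _ = ∑ j, A i j * ∑ k, c k * (B k) j := by
              refine Finset.sum_congr rfl fun j _ => by rw [← hx j]
          _ = ∑ j, ∑ k, c k * (A i j * (B k) j) := by
              refine Finset.sum_congr rfl fun j _ => ?_
              rw [Finset.mul_sum]; refine Finset.sum_congr rfl fun k _ => by ring
          _ = ∑ k, ∑ j, c k * (A i j * (B k) j) := Finset.sum_comm
          _ = ∑ k, c k * (hA.eigenvalues k * (B k) i) := by
              refine Finset.sum_congr rfl fun k _ => ?_
              rw [← Finset.mul_sum, heig]
    _ = ∑ k, ∑ i, x i * (c k * (hA.eigenvalues k * (B k) i)) := by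
        rw [Finset.sum_comm]
        exact Finset.sum_congr rfl fun i _ => Finset.mul_sum _ _ _
    _ = ∑ k, hA.eigenvalues k * (c k) ^ 2 := by
        refine Finset.sum_congr rfl fun k _ => ?_
        have : ∑ i, x i * (c k * (hA.eigenvalues k * (B k) i))
            = (c k * hA.eigenvalues k) * ∑ i, (B k) i * x i := by
          rw [Finset.mul_sum]; exact Finset.sum_congr rfl fun i _ => by ring
        rw [this]
        have : (∑ i, (B k) i * x i) = c k := rfl
        rw [this]; ring

lemma negsub_le {m k : ℕ} (A : Matrix (Fin m) (Fin m) ℝ) (hA : A.IsHermitian)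
    (w : Fin k → Fin m → ℝ)
    (hw : ∀ c : Fin k → ℝ, c ≠ 0 →
      (∑ i, c i • w i) ⬝ᵥ A *ᵥ (∑ i, c i • w i) < 0) :
    k ≤ (Finset.univ.filter fun i => hA.eigenvalues i < 0).card := by
  by_contra hlt
  push_neg at hlt
  set S := Finset.univ.filter fun i => hA.eigenvalues i < 0 with hS
  set B := hA.eigenvectorBasis with hB
  -- linear map c ↦ (s ↦ B s ⬝ᵥ ∑ i, c i • w i)
  let f : (Fin k → ℝ) →ₗ[ℝ] (↥S → ℝ) :=
    { toFun := fun c s => ∑ i, c i * ((⇑(B s.1) : Fin m → ℝ) ⬝ᵥ w i)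
      map_add' := by
        intro a b; funext s; simp [add_mul, Finset.sum_add_distrib]
      map_smul' := by
        intro r a; funext s; simp [Finset.mul_sum, mul_assoc] }
  have hnotinj : ¬ Function.Injective f := by
    intro hinj
    have h1 : Module.finrank ℝ (Fin k → ℝ) ≤ Module.finrank ℝ (↥S → ℝ) :=
      LinearMap.finrank_le_finrank_of_injective hinj
    simp only [Module.finrank_fintype_fun_eq_card, Fintype.card_fin,
      Fintype.card_coe] at h1
    omega
  rw [← LinearMap.ker_eq_bot] at hnotinj
  obtain ⟨c, hc, hc0⟩ := Submodule.exists_mem_ne_zero_of_ne_bot hnotinj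
  have hcker : ∀ s : ↥S, ∑ i, c i * ((⇑(B s.1) : Fin m → ℝ) ⬝ᵥ w i) = 0 := by
    intro s
    have := LinearMap.mem_ker.mp hc
    exact congrFun this s
  set x : Fin m → ℝ := ∑ i, c i • w i with hx
  have hdot : ∀ j : Fin m, j ∈ S → (⇑(B j) : Fin m → ℝ) ⬝ᵥ x = 0 := by
    intro j hj
    have h := hcker ⟨j, hj⟩
    rw [hx]
    have : (⇑(B j) : Fin m → ℝ) ⬝ᵥ (∑ i, c i • w i) = ∑ i, c i * ((⇑(B j) : Fin m → ℝ) ⬝ᵥ w i) := by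
      simp [dotProduct, Finset.mul_sum]
      rw [Finset.sum_comm]
      refine Finset.sum_congr rfl fun i _ => ?_
      refine Finset.sum_congr rfl fun l _ => by ring
    rw [this, h]
  have hquad : 0 ≤ x ⬝ᵥ A *ᵥ x := by
    rw [quad_eq A hA x]
    refine Finset.sum_nonneg fun j _ => ?_
    by_cases hj : j ∈ S
    · rw [hdot j hj]; simp
    · have : ¬ hA.eigenvalues j < 0 := by
        simpa [hS] using hj
      have := not_lt.mp this
      positivity
  exact absurd (hw c hc0) (not_lt.mpr hquad)

lemma negsub_ge {m : ℕ} (A : Matrix (Fin m) (Fin m) ℝ) (hA : A.IsHermitian) :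
    ∃ w : Fin (Finset.univ.filter fun i => hA.eigenvalues i < 0).card → (Fin m → ℝ),
      ∀ c : Fin (Finset.univ.filter fun i => hA.eigenvalues i < 0).card → ℝ, c ≠ 0 →
        (∑ i, c i • w i) ⬝ᵥ A *ᵥ (∑ i, c i • w i) < 0 := by
  set S := Finset.univ.filter fun i => hA.eigenvalues i < 0 with hS
  set B := hA.eigenvectorBasis with hB
  set g : Fin S.card → Fin m := fun i => (S.equivFin.symm i).1 with hg
  have hginj : Function.Injective g := fun a b hab => by
    have := Subtype.ext hab
    exact S.equivFin.symm.injective this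
  have hgS : ∀ i, g i ∈ S := fun i => (S.equivFin.symm i).2
  refine ⟨fun i => (⇑(B (g i)) : Fin m → ℝ), fun c hc0 => ?_⟩
  set x : Fin m → ℝ := ∑ i, c i • (⇑(B (g i)) : Fin m → ℝ) with hx
  have horth : ∀ j l : Fin m, (⇑(B j) : Fin m → ℝ) ⬝ᵥ (⇑(B l) : Fin m → ℝ) = if j = l then 1 else 0 := by
    intro j l
    have h := B.orthonormal
    rw [orthonormal_iff_ite] at h
    have h2 := h j l
    rw [← h2]
    simp [PiLp.inner_apply, dotProduct, RCLike.inner_apply]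
    exact Finset.sum_congr rfl fun _ _ => mul_comm _ _
  have hdot : ∀ j : Fin m, (⇑(B j) : Fin m → ℝ) ⬝ᵥ x = ∑ i, c i * (if j = g i then 1 else 0) := by
    intro j
    rw [hx]
    have : (⇑(B j) : Fin m → ℝ) ⬝ᵥ (∑ i, c i • (⇑(B (g i)) : Fin m → ℝ))
        = ∑ i, c i * ((⇑(B j) : Fin m → ℝ) ⬝ᵥ (⇑(B (g i)) : Fin m → ℝ)) := by
      simp [dotProduct, Finset.mul_sum]
      rw [Finset.sum_comm]
      refine Finset.sum_congr rfl fun i _ => Finset.sum_congr rfl fun l _ => by ring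
    rw [this]
    exact Finset.sum_congr rfl fun i _ => by rw [horth]
  rw [quad_eq A hA x]
  -- the sum equals ∑ i, eigenvalues (g i) * c i ^ 2
  have hzero : ∀ j ∈ Finset.univ, j ∉ Finset.image g Finset.univ →
      hA.eigenvalues j * ((⇑(B j) : Fin m → ℝ) ⬝ᵥ x) ^ 2 = 0 := by
    intro j _ hj
    have : (⇑(B j) : Fin m → ℝ) ⬝ᵥ x = 0 := by
      rw [hdot]
      refine Finset.sum_eq_zero fun i _ => ?_
      have : j ≠ g i := fun hh => hj (Finset.mem_image.mpr ⟨i, Finset.mem_univ i, hh.symm⟩)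
      simp [this]
    rw [this]; ring
  have hsum : ∑ j, hA.eigenvalues j * ((⇑(B j) : Fin m → ℝ) ⬝ᵥ x) ^ 2
      = ∑ i, hA.eigenvalues (g i) * (c i) ^ 2 := by
    rw [← Finset.sum_subset (Finset.subset_univ (Finset.image g Finset.univ)) hzero]
    rw [Finset.sum_image (fun a _ b _ hab => hginj hab)]
    refine Finset.sum_congr rfl fun i _ => ?_
    congr 1
    rw [hdot]
    have heach : ∀ i' : Fin S.card, (c i' * (if g i = g i' then 1 else 0))
        = if i' = i then c i else 0 := by
      intro i'
      by_cases h : i' = i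
      · subst h; simp
      · have : g i ≠ g i' := fun hh => h (hginj hh.symm)
        simp [this, h]
    rw [Finset.sum_congr rfl fun i' _ => heach i']
    simp
  rw [hsum]
  -- now strict negativity
  obtain ⟨i0, hi0⟩ : ∃ i, c i ≠ 0 := by
    by_contra h
    push_neg at h
    exact hc0 (funext fun i => h i)
  have hterm : ∀ i ∈ Finset.univ, hA.eigenvalues (g i) * (c i) ^ 2 ≤ 0 := by
    intro i _
    have hneg : hA.eigenvalues (g i) < 0 := by
      have := hgS i
      simpa [hS] using this
    nlinarith [sq_nonneg (c i)]
  have hstrict : hA.eigenvalues (g i0) * (c i0) ^ 2 < 0 := by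
    have hneg : hA.eigenvalues (g i0) < 0 := by
      have := hgS i0
      simpa [hS] using this
    have : (0:ℝ) < (c i0)^2 := by positivity
    nlinarith
  calc ∑ i, hA.eigenvalues (g i) * (c i) ^ 2 < ∑ _i : Fin S.card, (0:ℝ) := by
        refine Finset.sum_lt_sum hterm ⟨i0, Finset.mem_univ i0, hstrict⟩
    _ = 0 := by simp

lemma possub_le {m k : ℕ} (A : Matrix (Fin m) (Fin m) ℝ) (hA : A.IsHermitian)
    (w : Fin k → Fin m → ℝ)
    (hw : ∀ c : Fin k → ℝ, c ≠ 0 →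
      0 < (∑ i, c i • w i) ⬝ᵥ A *ᵥ (∑ i, c i • w i)) :
    k ≤ (Finset.univ.filter fun i => 0 < hA.eigenvalues i).card := by
  by_contra hlt
  push_neg at hlt
  set S := Finset.univ.filter fun i => 0 < hA.eigenvalues i with hS
  set B := hA.eigenvectorBasis with hB
  let f : (Fin k → ℝ) →ₗ[ℝ] (↥S → ℝ) :=
    { toFun := fun c s => ∑ i, c i * ((⇑(B s.1) : Fin m → ℝ) ⬝ᵥ w i)
      map_add' := by
        intro a b; funext s; simp [add_mul, Finset.sum_add_distrib]
      map_smul' := by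
        intro r a; funext s; simp [Finset.mul_sum, mul_assoc] }
  have hnotinj : ¬ Function.Injective f := by
    intro hinj
    have h1 : Module.finrank ℝ (Fin k → ℝ) ≤ Module.finrank ℝ (↥S → ℝ) :=
      LinearMap.finrank_le_finrank_of_injective hinj
    simp only [Module.finrank_fintype_fun_eq_card, Fintype.card_fin,
      Fintype.card_coe] at h1
    omega
  rw [← LinearMap.ker_eq_bot] at hnotinj
  obtain ⟨c, hc, hc0⟩ := Submodule.exists_mem_ne_zero_of_ne_bot hnotinj
  have hcker : ∀ s : ↥S, ∑ i, c i * ((⇑(B s.1) : Fin m → ℝ) ⬝ᵥ w i) = 0 := by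
    intro s
    have := LinearMap.mem_ker.mp hc
    exact congrFun this s
  set x : Fin m → ℝ := ∑ i, c i • w i with hx
  have hdot : ∀ j : Fin m, j ∈ S → (⇑(B j) : Fin m → ℝ) ⬝ᵥ x = 0 := by
    intro j hj
    have h := hcker ⟨j, hj⟩
    rw [hx]
    have : (⇑(B j) : Fin m → ℝ) ⬝ᵥ (∑ i, c i • w i) = ∑ i, c i * ((⇑(B j) : Fin m → ℝ) ⬝ᵥ w i) := by
      simp [dotProduct, Finset.mul_sum]
      rw [Finset.sum_comm]
      refine Finset.sum_congr rfl fun i _ => ?_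
      refine Finset.sum_congr rfl fun l _ => by ring
    rw [this, h]
  have hquad : x ⬝ᵥ A *ᵥ x ≤ 0 := by
    rw [quad_eq A hA x]
    refine Finset.sum_nonpos fun j _ => ?_
    by_cases hj : j ∈ S
    · rw [hdot j hj]; simp
    · have : ¬ 0 < hA.eigenvalues j := by
        simpa [hS] using hj
      have hle := not_lt.mp this
      nlinarith [sq_nonneg ((⇑(B j) : Fin m → ℝ) ⬝ᵥ x)]
  exact absurd (hw c hc0) (not_lt.mpr hquad)

lemma possub_ge {m : ℕ} (A : Matrix (Fin m) (Fin m) ℝ) (hA : A.IsHermitian) :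
    ∃ w : Fin (Finset.univ.filter fun i => 0 < hA.eigenvalues i).card → (Fin m → ℝ),
      ∀ c : Fin (Finset.univ.filter fun i => 0 < hA.eigenvalues i).card → ℝ, c ≠ 0 →
        0 < (∑ i, c i • w i) ⬝ᵥ A *ᵥ (∑ i, c i • w i) := by
  set S := Finset.univ.filter fun i => 0 < hA.eigenvalues i with hS
  set B := hA.eigenvectorBasis with hB
  set g : Fin S.card → Fin m := fun i => (S.equivFin.symm i).1 with hg
  have hginj : Function.Injective g := fun a b hab => by
    have := Subtype.ext hab
    exact S.equivFin.symm.injective this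
  have hgS : ∀ i, g i ∈ S := fun i => (S.equivFin.symm i).2
  refine ⟨fun i => (⇑(B (g i)) : Fin m → ℝ), fun c hc0 => ?_⟩
  set x : Fin m → ℝ := ∑ i, c i • (⇑(B (g i)) : Fin m → ℝ) with hx
  have horth : ∀ j l : Fin m, (⇑(B j) : Fin m → ℝ) ⬝ᵥ (⇑(B l) : Fin m → ℝ) = if j = l then 1 else 0 := by
    intro j l
    have h := B.orthonormal
    rw [orthonormal_iff_ite] at h
    have h2 := h j l
    rw [← h2]
    simp [PiLp.inner_apply, dotProduct, RCLike.inner_apply]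
    exact Finset.sum_congr rfl fun _ _ => mul_comm _ _
  have hdot : ∀ j : Fin m, (⇑(B j) : Fin m → ℝ) ⬝ᵥ x = ∑ i, c i * (if j = g i then 1 else 0) := by
    intro j
    rw [hx]
    have : (⇑(B j) : Fin m → ℝ) ⬝ᵥ (∑ i, c i • (⇑(B (g i)) : Fin m → ℝ))
        = ∑ i, c i * ((⇑(B j) : Fin m → ℝ) ⬝ᵥ (⇑(B (g i)) : Fin m → ℝ)) := by
      simp [dotProduct, Finset.mul_sum]
      rw [Finset.sum_comm]
      refine Finset.sum_congr rfl fun i _ => Finset.sum_congr rfl fun l _ => by ring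
    rw [this]
    exact Finset.sum_congr rfl fun i _ => by rw [horth]
  rw [quad_eq A hA x]
  have hzero : ∀ j ∈ Finset.univ, j ∉ Finset.image g Finset.univ →
      hA.eigenvalues j * ((⇑(B j) : Fin m → ℝ) ⬝ᵥ x) ^ 2 = 0 := by
    intro j _ hj
    have : (⇑(B j) : Fin m → ℝ) ⬝ᵥ x = 0 := by
      rw [hdot]
      refine Finset.sum_eq_zero fun i _ => ?_
      have : j ≠ g i := fun hh => hj (Finset.mem_image.mpr ⟨i, Finset.mem_univ i, hh.symm⟩)
      simp [this]
    rw [this]; ring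
  have hsum : ∑ j, hA.eigenvalues j * ((⇑(B j) : Fin m → ℝ) ⬝ᵥ x) ^ 2
      = ∑ i, hA.eigenvalues (g i) * (c i) ^ 2 := by
    rw [← Finset.sum_subset (Finset.subset_univ (Finset.image g Finset.univ)) hzero]
    rw [Finset.sum_image (fun a _ b _ hab => hginj hab)]
    refine Finset.sum_congr rfl fun i _ => ?_
    congr 1
    rw [hdot]
    have heach : ∀ i' : Fin S.card, (c i' * (if g i = g i' then 1 else 0))
        = if i' = i then c i else 0 := by
      intro i'
      by_cases h : i' = i
      · subst h; simp
      · have : g i ≠ g i' := fun hh => h (hginj hh.symm)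
        simp [this, h]
    rw [Finset.sum_congr rfl fun i' _ => heach i']
    simp
  rw [hsum]
  obtain ⟨i0, hi0⟩ : ∃ i, c i ≠ 0 := by
    by_contra h
    push_neg at h
    exact hc0 (funext fun i => h i)
  have hterm : ∀ i ∈ Finset.univ, (0:ℝ) ≤ hA.eigenvalues (g i) * (c i) ^ 2 := by
    intro i _
    have hpos : 0 < hA.eigenvalues (g i) := by
      have := hgS i
      simpa [hS] using this
    nlinarith [sq_nonneg (c i)]
  have hstrict : (0:ℝ) < hA.eigenvalues (g i0) * (c i0) ^ 2 := by
    have hpos : 0 < hA.eigenvalues (g i0) := by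
      have := hgS i0
      simpa [hS] using this
    have : (0:ℝ) < (c i0)^2 := by positivity
    nlinarith
  calc (0:ℝ) = ∑ _i : Fin S.card, (0:ℝ) := by simp
    _ < ∑ i, hA.eigenvalues (g i) * (c i) ^ 2 :=
        Finset.sum_lt_sum hterm ⟨i0, Finset.mem_univ i0, hstrict⟩

lemma key_quad {n : ℕ} (M : Matrix (Fin n) (Fin n) ℝ) (hMsym : ∀ i j, M j i = M i j)
    (Ω : Matrix (Fin (n + 1)) (Fin (n + 1)) ℝ)
    (h1 : ∀ i j : Fin n, Ω i.castSucc j.castSucc = M i j)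
    (h2 : ∀ i : Fin n, Ω i.castSucc (Fin.last n) = -∑ j, M i j)
    (h3 : ∀ j : Fin n, Ω (Fin.last n) j.castSucc = -∑ i, M j i)
    (h4 : Ω (Fin.last n) (Fin.last n) = ∑ i, ∑ j, M i j)
    (x : Fin (n + 1) → ℝ) :
    x ⬝ᵥ Ω *ᵥ x = (fun i => x i.castSucc - x (Fin.last n)) ⬝ᵥ
      M *ᵥ (fun i => x i.castSucc - x (Fin.last n)) := by
  set t := x (Fin.last n) with ht
  set y : Fin n → ℝ := fun i => x i.castSucc with hy
  have hsplit : ∀ f : Fin (n+1) → ℝ, ∑ i, f i = (∑ i : Fin n, f i.castSucc) + f (Fin.last n) :=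
    fun f => Fin.sum_univ_castSucc f
  have hL : x ⬝ᵥ Ω *ᵥ x
      = (∑ i, (∑ j, (M i j * y i * y j - t * (M i j * y i))))
        + ((∑ j, ∑ i, (- (t * (M j i * y j)))) + t^2 * ∑ i, ∑ j, M i j) := by
    calc x ⬝ᵥ Ω *ᵥ x = ∑ i : Fin (n+1), x i * ∑ j, Ω i j * x j := rfl
      _ = (∑ i : Fin n, y i * ((∑ j, M i j * y j) + (-(∑ j, M i j)) * t))
          + t * ((∑ j, (-(∑ i, M j i)) * y j) + (∑ i, ∑ j, M i j) * t) := by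
          rw [hsplit]
          congr 1
          · refine Finset.sum_congr rfl fun i _ => ?_
            congr 1
            rw [hsplit]
            rw [h2]
            congr 1
            exact Finset.sum_congr rfl fun j _ => by rw [h1]
          · congr 1
            rw [hsplit, h4]
            congr 1
            exact Finset.sum_congr rfl fun j _ => by rw [h3]
      _ = _ := by
          congr 1
          · refine Finset.sum_congr rfl fun i _ => ?_
            rw [mul_add, Finset.mul_sum, neg_mul, Finset.sum_mul, mul_neg, Finset.mul_sum,
              ← Finset.sum_neg_distrib, ← Finset.sum_add_distrib]
            refine Finset.sum_congr rfl fun j _ => by ring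
          · rw [mul_add, Finset.mul_sum]
            congr 1
            · refine Finset.sum_congr rfl fun j _ => ?_
              rw [neg_mul, mul_neg, Finset.sum_mul, Finset.mul_sum, ← Finset.sum_neg_distrib]
            · ring
  have hR : (fun i => x i.castSucc - x (Fin.last n)) ⬝ᵥ
      M *ᵥ (fun i => x i.castSucc - x (Fin.last n))
      = ∑ i, ∑ j, (M i j * (y i - t) * (y j - t)) := by
    calc (fun i => x i.castSucc - x (Fin.last n)) ⬝ᵥ
        M *ᵥ (fun i => x i.castSucc - x (Fin.last n))
        = ∑ i, (y i - t) * ∑ j, M i j * (y j - t) := rfl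
      _ = ∑ i, ∑ j, (M i j * (y i - t) * (y j - t)) := by
          refine Finset.sum_congr rfl fun i _ => ?_
          rw [Finset.mul_sum]
          refine Finset.sum_congr rfl fun j _ => by ring
  rw [hL, hR]
  -- expand RHS double sum
  have hexp : ∑ i, ∑ j, (M i j * (y i - t) * (y j - t))
      = ∑ i, ∑ j, ((M i j * y i * y j - t * (M i j * y i))
          + (- (t * (M i j * y j)) + t^2 * M i j)) := by
    refine Finset.sum_congr rfl fun i _ => Finset.sum_congr rfl fun j _ => by ring
  rw [hexp]
  have hsplit2 : ∑ i, ∑ j, ((M i j * y i * y j - t * (M i j * y i))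
          + (- (t * (M i j * y j)) + t^2 * M i j))
      = (∑ i, ∑ j, (M i j * y i * y j - t * (M i j * y i)))
        + ∑ i, ∑ j, (- (t * (M i j * y j)) + t^2 * M i j) := by
    rw [← Finset.sum_add_distrib]
    refine Finset.sum_congr rfl fun i _ => by rw [← Finset.sum_add_distrib]
  rw [hsplit2]
  congr 1
  have hr2 : ∑ i, ∑ j, (- (t * (M i j * y j)) + t^2 * M i j)
      = (∑ i, ∑ j, (- (t * (M i j * y j)))) + ∑ i, ∑ j, t^2 * M i j := by
    rw [← Finset.sum_add_distrib]
    refine Finset.sum_congr rfl fun i _ => by rw [← Finset.sum_add_distrib]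
  rw [hr2]
  congr 1
  · rw [Finset.sum_comm]
    refine Finset.sum_congr rfl fun a _ => Finset.sum_congr rfl fun bb _ => ?_
    rw [hMsym]
  · rw [Finset.mul_sum]
    refine Finset.sum_congr rfl fun i _ => Finset.mul_sum _ _ _

lemma rank_eq_negcard_add_poscard {m : ℕ} (A : Matrix (Fin m) (Fin m) ℝ) (hA : A.IsHermitian) :
    A.rank = (Finset.univ.filter fun i => hA.eigenvalues i < 0).card
      + (Finset.univ.filter fun i => 0 < hA.eigenvalues i).card := by
  rw [hA.rank_eq_card_non_zero_eigs, Fintype.card_subtype]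
  rw [← Finset.card_union_of_disjoint]
  · congr 1
    ext i
    simp only [Finset.mem_filter, Finset.mem_univ, true_and, Finset.mem_union]
    constructor
    · intro h
      rcases lt_or_gt_of_ne h with h' | h'
      · exact Or.inl h'
      · exact Or.inr h'
    · rintro (h | h)
      · exact ne_of_lt h
      · exact (ne_of_lt h).symm
  · rw [Finset.disjoint_left]
    intro i hi1 hi2
    simp only [Finset.mem_filter] at hi1 hi2
    linarith [hi1.2, hi2.2]

/-- Let M be an n×n real symmetric matrix with exactly one negative
eigenvalue, and suppose b := 1ᵀM1 < 0.  Define α := −M1 and the (n+1)×(n+1)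
block matrix Ω = [[M, α],[αᵀ, b]].  Then Ω has the same rank as M and has
exactly one negative eigenvalue. -/
theorem stmt_1 {n : ℕ} (M : Matrix (Fin n) (Fin n) ℝ)
    (hM : M.IsHermitian)
    (honeM : (Finset.univ.filter (fun i => hM.eigenvalues i < 0)).card = 1)
    (α : Fin n → ℝ) (hα : α = -(M.mulVec (fun _ => 1)))
    (b : ℝ) (hb : b = (fun _ => (1 : ℝ)) ⬝ᵥ M.mulVec (fun _ => 1))
    (hbneg : b < 0)
    (Ω : Matrix (Fin (n + 1)) (Fin (n + 1)) ℝ)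
    (hΩM : ∀ i j : Fin n, Ω i.castSucc j.castSucc = M i j)
    (hΩα : ∀ i : Fin n, Ω i.castSucc (Fin.last n) = α i)
    (hΩαt : ∀ j : Fin n, Ω (Fin.last n) j.castSucc = α j)
    (hΩb : Ω (Fin.last n) (Fin.last n) = b) :
    Ω.rank = M.rank ∧
      ∃ hΩ : Ω.IsHermitian,
        (Finset.univ.filter (fun i => hΩ.eigenvalues i < 0)).card = 1 := by
  have hMsym : ∀ i j, M j i = M i j := by
    intro i j
    have h := congrFun (congrFun hM j) i
    simpa [Matrix.conjTranspose_apply] using h.symm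
  have h2 : ∀ i : Fin n, Ω i.castSucc (Fin.last n) = -∑ j, M i j := by
    intro i
    rw [hΩα, hα]
    simp [mulVec, dotProduct]
  have h3 : ∀ j : Fin n, Ω (Fin.last n) j.castSucc = -∑ i, M j i := by
    intro j
    rw [hΩαt, hα]
    simp [mulVec, dotProduct]
  have h4 : Ω (Fin.last n) (Fin.last n) = ∑ i, ∑ j, M i j := by
    rw [hΩb, hb]
    simp [mulVec, dotProduct]
  have hkey := key_quad M hMsym Ω hΩM h2 h3 h4
  have hΩsym : Ω.IsHermitian := by
    rw [Matrix.IsHermitian]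
    ext i j
    rw [Matrix.conjTranspose_apply, star_trivial]
    refine Fin.lastCases ?_ (fun i' => ?_) i
    · refine Fin.lastCases ?_ (fun j' => ?_) j
      · rfl
      · rw [hΩα j', hΩαt j']
    · refine Fin.lastCases ?_ (fun j' => ?_) j
      · rw [hΩαt i', hΩα i']
      · rw [hΩM, hΩM, hMsym]
  -- transfer of negative counts
  have hneg_ge : (Finset.univ.filter fun i => hM.eigenvalues i < 0).card
      ≤ (Finset.univ.filter fun i => hΩsym.eigenvalues i < 0).card := by
    obtain ⟨w, hw⟩ := negsub_ge M hM
    refine negsub_le Ω hΩsym (fun i => (Fin.snoc (w i) 0 : Fin (n+1) → ℝ)) ?_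
    intro c hc
    set X : Fin (n+1) → ℝ := ∑ i, c i • (Fin.snoc (w i) 0 : Fin (n+1) → ℝ) with hX
    have hphi : (fun j => X j.castSucc - X (Fin.last n)) = ∑ i, c i • w i := by
      funext j
      simp only [hX, Finset.sum_apply, Pi.smul_apply, smul_eq_mul, Fin.snoc_castSucc,
        Fin.snoc_last, mul_zero, Finset.sum_const_zero, sub_zero]
    rw [hkey X, hphi]
    exact hw c hc
  have hneg_le : (Finset.univ.filter fun i => hΩsym.eigenvalues i < 0).card
      ≤ (Finset.univ.filter fun i => hM.eigenvalues i < 0).card := by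
    obtain ⟨w, hw⟩ := negsub_ge Ω hΩsym
    refine negsub_le M hM (fun i => (fun j : Fin n => w i j.castSucc - w i (Fin.last n))) ?_
    intro c hc
    have hphi : (fun j => (∑ i, c i • w i) j.castSucc - (∑ i, c i • w i) (Fin.last n))
        = ∑ i, c i • (fun j : Fin n => w i j.castSucc - w i (Fin.last n)) := by
      funext j
      simp only [Finset.sum_apply, Pi.smul_apply, smul_eq_mul, ← Finset.sum_sub_distrib]
      exact Finset.sum_congr rfl fun i _ => by ring
    have h := hw c hc
    rw [hkey (∑ i, c i • w i), hphi] at h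
    exact h
  -- transfer of positive counts
  have hpos_ge : (Finset.univ.filter fun i => 0 < hM.eigenvalues i).card
      ≤ (Finset.univ.filter fun i => 0 < hΩsym.eigenvalues i).card := by
    obtain ⟨w, hw⟩ := possub_ge M hM
    refine possub_le Ω hΩsym (fun i => (Fin.snoc (w i) 0 : Fin (n+1) → ℝ)) ?_
    intro c hc
    set X : Fin (n+1) → ℝ := ∑ i, c i • (Fin.snoc (w i) 0 : Fin (n+1) → ℝ) with hX
    have hphi : (fun j => X j.castSucc - X (Fin.last n)) = ∑ i, c i • w i := by
      funext j
      simp only [hX, Finset.sum_apply, Pi.smul_apply, smul_eq_mul, Fin.snoc_castSucc,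
        Fin.snoc_last, mul_zero, Finset.sum_const_zero, sub_zero]
    rw [hkey X, hphi]
    exact hw c hc
  have hpos_le : (Finset.univ.filter fun i => 0 < hΩsym.eigenvalues i).card
      ≤ (Finset.univ.filter fun i => 0 < hM.eigenvalues i).card := by
    obtain ⟨w, hw⟩ := possub_ge Ω hΩsym
    refine possub_le M hM (fun i => (fun j : Fin n => w i j.castSucc - w i (Fin.last n))) ?_
    intro c hc
    have hphi : (fun j => (∑ i, c i • w i) j.castSucc - (∑ i, c i • w i) (Fin.last n))
        = ∑ i, c i • (fun j : Fin n => w i j.castSucc - w i (Fin.last n)) := by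
      funext j
      simp only [Finset.sum_apply, Pi.smul_apply, smul_eq_mul, ← Finset.sum_sub_distrib]
      exact Finset.sum_congr rfl fun i _ => by ring
    have h := hw c hc
    rw [hkey (∑ i, c i • w i), hphi] at h
    exact h
  have hnegeq : (Finset.univ.filter fun i => hΩsym.eigenvalues i < 0).card
      = (Finset.univ.filter fun i => hM.eigenvalues i < 0).card :=
    le_antisymm hneg_le hneg_ge
  have hposeq : (Finset.univ.filter fun i => 0 < hΩsym.eigenvalues i).card
      = (Finset.univ.filter fun i => 0 < hM.eigenvalues i).card :=
    le_antisymm hpos_le hpos_ge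
  constructor
  · rw [rank_eq_negcard_add_poscard Ω hΩsym, rank_eq_negcard_add_poscard M hM,
      hnegeq, hposeq]
  · exact ⟨hΩsym, by rw [hnegeq, honeM]⟩
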